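/- In single-decree Paxos with acceptor state (min_proposal, accepted_proposal, accepted_value), if a value v is chosen with proposal number n (i.e., a majority of acceptors have accepted (n, v)), then any acceptor state reachable afterwards satisfies: any proposal n' > n that gets accepted by a majority must carry value v. Consequently, uniform agreement holds: if values v and v' are both decided, then v = v'. -/

import Mathlib

/-- State of a Paxos acceptor. -/
structure AccState (V : Type) where
  minP : ℕ
  accP : ℕ
  accV : Option V

/-- Events at acceptors: a (promised) Prepare, or a successful Accept. -/
inductive Ev (A V : Type) : Type
  | prepare (a : A) (n : ℕ)
  | accept (a : A) (n : ℕ) (v : V)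

/-- Effect of an event on the state of acceptor `a`. -/
def stepAcc {A V : Type} [DecidableEq A] (a : A) (s : AccState V) : Ev A V → AccState V
  | .prepare a' n => if a' = a then { s with minP := max s.minP n } else s
  | .accept a' n v => if a' = a ∧ s.minP ≤ n then ⟨n, n, some v⟩ else s

/-- State of acceptor `a` after processing the history `h` (initially `(0,0,⊥)`). -/
def accStateAfter {A V : Type} [DecidableEq A] (h : List (Ev A V)) (a : A) : AccState V :=
  h.foldl (stepAcc a) ⟨0, 0, none⟩

/-- A quorum is a majority of the acceptors. -/
def Quorum {A : Type} [Fintype A] (Q : Finset A) : Prop :=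
  Fintype.card A < 2 * Q.card

/-- Well-formed Paxos histories: every accept event `accept a n v` at position `i`
satisfies: (1) it succeeds, i.e. `n ≥` the acceptor's `min_proposal` at that point;
(2) all accepts with proposal number `n` carry the same value (proposal numbers are
owned by a single proposer); (3) the proposer of `n` first got acknowledged Prepare
responses from a quorum `Q` (each acceptor `b ∈ Q` had `min_proposal < n` at the time
`t b` of its prepare), and `v` is either the proposer's own input (in `Proposed`) if
no acceptor of `Q` had accepted a value, or the accepted value with the highest
accepted proposal among the responses. -/
def WF {A V : Type} [Fintype A] [DecidableEq A] (Proposed : Set V)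
    (h : List (Ev A V)) : Prop :=
  ∀ i a n v, h[i]? = some (.accept a n v) →
    (accStateAfter (h.take i) a).minP ≤ n ∧
    (∀ j a' v', h[(j : ℕ)]? = some (.accept a' n v') → v' = v) ∧
    (∃ Q : Finset A, Quorum Q ∧ ∃ t : A → ℕ,
      (∀ b ∈ Q, t b < i ∧ h[t b]? = some (.prepare b n) ∧
        (accStateAfter (h.take (t b)) b).minP < n) ∧
      (((∀ b ∈ Q, (accStateAfter (h.take (t b)) b).accV = none) ∧ v ∈ Proposed) ∨
       (∃ b0 ∈ Q, (accStateAfter (h.take (t b0)) b0).accV = some v ∧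
         ∀ b ∈ Q,
           (accStateAfter (h.take (t b)) b).accP
             ≤ (accStateAfter (h.take (t b0)) b0).accP)))

/-- `v` is chosen (decided) with proposal number `n`: a quorum of acceptors has
accepted `(n, v)`. -/
def Chosen {A V : Type} [Fintype A] [DecidableEq A] (h : List (Ev A V)) (n : ℕ)
    (v : V) : Prop :=
  ∃ Q : Finset A, Quorum Q ∧ ∀ a ∈ Q, ∃ i, h[(i : ℕ)]? = some (Ev.accept a n v)


section PaxosAux
variable {A V : Type} [DecidableEq A]

lemma step_minP (a : A) (s : AccState V) (e : Ev A V) :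
    s.minP ≤ (stepAcc a s e).minP := by
  cases e with
  | prepare a' n =>
    simp only [stepAcc]; split
    · exact le_max_left _ _
    · exact le_refl _
  | accept a' n v =>
    simp only [stepAcc]; split
    · next h => exact h.2
    · exact le_refl _

lemma fold_minP (a : A) (s : AccState V) (l : List (Ev A V)) :
    s.minP ≤ (l.foldl (stepAcc a) s).minP := by
  induction l generalizing s with
  | nil => exact le_refl _
  | cons e l ih => exact le_trans (step_minP a s e) (ih _)

lemma step_accP (a : A) (s : AccState V) (e : Ev A V) (hs : s.accP ≤ s.minP) :
    s.accP ≤ (stepAcc a s e).accP ∧ (stepAcc a s e).accP ≤ (stepAcc a s e).minP := by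
  cases e with
  | prepare a' n =>
    simp only [stepAcc]; split
    · exact ⟨le_refl _, le_trans hs (le_max_left _ _)⟩
    · exact ⟨le_refl _, hs⟩
  | accept a' n v =>
    simp only [stepAcc]; split
    · next h => exact ⟨le_trans hs h.2, le_refl _⟩
    · exact ⟨le_refl _, hs⟩

lemma fold_accP (a : A) (s : AccState V) (l : List (Ev A V)) (hs : s.accP ≤ s.minP) :
    s.accP ≤ (l.foldl (stepAcc a) s).accP ∧
      (l.foldl (stepAcc a) s).accP ≤ (l.foldl (stepAcc a) s).minP := by
  induction l generalizing s with
  | nil => exact ⟨le_refl _, hs⟩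
  | cons e l ih =>
    obtain ⟨h1, h2⟩ := step_accP a s e hs
    obtain ⟨h3, h4⟩ := ih (stepAcc a s e) h2
    exact ⟨le_trans h1 h3, h4⟩

lemma step_accV (a : A) (s : AccState V) (e : Ev A V) (hs : s.accV.isSome) :
    (stepAcc a s e).accV.isSome := by
  cases e with
  | prepare a' n => simp only [stepAcc]; split <;> exact hs
  | accept a' n v => simp only [stepAcc]; split
                     · rfl
                     · exact hs

lemma fold_accV (a : A) (s : AccState V) (l : List (Ev A V)) (hs : s.accV.isSome) :
    ((l.foldl (stepAcc a) s).accV).isSome := by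
  induction l generalizing s with
  | nil => exact hs
  | cons e l ih => exact ih _ (step_accV a s e hs)

lemma after_mono {h : List (Ev A V)} {i j : ℕ} (hij : i ≤ j) (a : A) :
    accStateAfter (h.take j) a =
      ((h.take j).drop i).foldl (stepAcc a) (accStateAfter (h.take i) a) := by
  have key : h.take j = h.take i ++ (h.take j).drop i := by
    conv_lhs => rw [← List.take_append_drop i (h.take j)]
    rw [List.take_take, min_eq_left hij]
  conv_lhs => rw [accStateAfter, key, List.foldl_append]
  rfl

lemma after_step {h : List (Ev A V)} {i : ℕ} {e : Ev A V} (he : h[i]? = some e) (a : A) :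
    accStateAfter (h.take (i+1)) a = stepAcc a (accStateAfter (h.take i) a) e := by
  rw [accStateAfter, List.take_succ, he]
  simp [List.foldl_append, accStateAfter]

lemma after_stall {h : List (Ev A V)} {i : ℕ} (he : h[i]? = none) (a : A) :
    accStateAfter (h.take (i+1)) a = accStateAfter (h.take i) a := by
  rw [List.getElem?_eq_none_iff] at he
  rw [List.take_of_length_le he, List.take_of_length_le (le_trans he (Nat.le_succ i))]

lemma provenance (h : List (Ev A V)) (a : A) (j : ℕ) (w : V)
    (hw : (accStateAfter (h.take j) a).accV = some w) :
    ∃ k : ℕ, h[k]? = some (Ev.accept a (accStateAfter (h.take j) a).accP w) := by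
  induction j with
  | zero => simp [accStateAfter] at hw
  | succ j ih =>
    cases hg : h[j]? with
    | none => rw [after_stall hg] at hw ⊢; exact ih hw
    | some e =>
      rw [after_step hg] at hw ⊢
      cases e with
      | prepare a' m =>
        simp only [stepAcc] at hw ⊢
        split at hw
        · next hcond =>
          simp only [hcond, if_pos rfl] at *
          exact ih hw
        · next hcond => rw [if_neg hcond]; exact ih hw
      | accept a' m u =>
        simp only [stepAcc] at hw ⊢
        split at hw
        · next hcond =>
          rw [if_pos hcond]
          simp only at hw
          obtain ⟨rfl, _⟩ := hcond
          exact ⟨j, by rw [hg]; simp only [Option.some.injEq] at hw ⊢; rw [hw]⟩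
        · next hcond => rw [if_neg hcond]; exact ih hw

end PaxosAux

lemma quorum_inter {A : Type} [Fintype A] [DecidableEq A] {Q Q' : Finset A}
    (hQ : Quorum Q) (hQ' : Quorum Q') : ∃ a, a ∈ Q ∧ a ∈ Q' := by
  have h1 := Finset.card_union_add_card_inter Q Q'
  have h2 : (Q ∪ Q').card ≤ Fintype.card A := Finset.card_le_univ _
  have h3 : 0 < (Q ∩ Q').card := by
    unfold Quorum at hQ hQ'; omega
  obtain ⟨a, ha⟩ := Finset.card_pos.mp h3
  exact ⟨a, Finset.mem_inter.mp ha⟩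

lemma quorum_nonempty {A : Type} [Fintype A] {Q : Finset A} (hQ : Quorum Q) :
    ∃ a, a ∈ Q := by
  have : 0 < Q.card := by unfold Quorum at hQ; omega
  obtain ⟨a, ha⟩ := Finset.card_pos.mp this
  exact ⟨a, ha⟩

lemma accP_minP {A V : Type} [DecidableEq A] (h : List (Ev A V)) (a : A) (j : ℕ) :
    (accStateAfter (h.take j) a).accP ≤ (accStateAfter (h.take j) a).minP :=
  (fold_accP a ⟨0,0,none⟩ (h.take j) (le_refl 0)).2

lemma paxos_key {A V : Type} [Fintype A] [DecidableEq A] (Proposed : Set V)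
    (h : List (Ev A V)) (n : ℕ) (v : V) (hwf : WF Proposed h)
    (hch : Chosen h n v) :
    ∀ n', n < n' → ∀ (i : ℕ) (a : A) v', h[i]? = some (Ev.accept a n' v') → v' = v := by
  intro n'
  induction n' using Nat.strong_induction_on with
  | _ n' IH =>
  intro hn i a v' hi
  obtain ⟨Qc, hQc, hacc⟩ := hch
  obtain ⟨hsucc, huniq, Q, hQ, t, ht, hcase⟩ := hwf i a n' v' hi
  obtain ⟨b, hbQ, hbQc⟩ := quorum_inter hQ hQc
  obtain ⟨ib, hib⟩ := hacc b hbQc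
  obtain ⟨htb1, htb2, htb3⟩ := ht b hbQ
  obtain ⟨hsb, huniqb, -⟩ := hwf ib b n v hib
  -- any accept with number m, n ≤ m < n', carries value v
  have hmid : ∀ m, n ≤ m → m < n' → ∀ (k : ℕ) (c : A) w, h[k]? = some (Ev.accept c m w) → w = v := by
    intro m hm1 hm2 k c w hk
    rcases eq_or_lt_of_le hm1 with rfl | hlt
    · exact huniqb k c w hk
    · exact IH m hm2 hlt k c w hk
  rcases lt_trichotomy (t b) ib with hlt | heq | hlt
  · -- prepare for n' before accept of (n,v): accept could not succeed
    exfalso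
    have h1 : n' ≤ (accStateAfter (h.take (t b + 1)) b).minP := by
      rw [after_step htb2]
      simp only [stepAcc, if_pos rfl]
      exact le_max_right _ _
    have h2 : (accStateAfter (h.take (t b + 1)) b).minP
        ≤ (accStateAfter (h.take ib) b).minP := by
      rw [after_mono (show t b + 1 ≤ ib from hlt) b]
      exact fold_minP _ _ _
    omega
  · rw [heq, hib] at htb2; exact absurd htb2 (by simp)
  · -- accept of (n,v) before the prepare at t b
    have hstate : accStateAfter (h.take (ib + 1)) b = ⟨n, n, some v⟩ := by
      rw [after_step hib]
      simp [stepAcc, hsb]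
    have hmono := after_mono (h := h) (show ib + 1 ≤ t b from hlt) b
    have haccP : n ≤ (accStateAfter (h.take (t b)) b).accP := by
      rw [hmono]
      have := (fold_accP b ⟨n, n, some v⟩ ((h.take (t b)).drop (ib+1)) (le_refl n)).1
      rw [hstate]; exact this
    have haccV : ((accStateAfter (h.take (t b)) b).accV).isSome := by
      rw [hmono]
      apply fold_accV
      rw [hstate]; rfl
    obtain ⟨w, hw⟩ := Option.isSome_iff_exists.mp haccV
    rcases hcase with ⟨hnone, -⟩ | ⟨b0, hb0Q, hb0V, hb0max⟩
    · rw [hnone b hbQ] at hw; exact absurd hw (by simp)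
    · obtain ⟨-, -, htb0⟩ := ht b0 hb0Q
      have hmax := hb0max b hbQ
      have hle := accP_minP h b0 (t b0)
      obtain ⟨k, hk⟩ := provenance h b0 (t b0) v' hb0V
      exact hmid _ (le_trans haccP hmax) (lt_of_le_of_lt hle htb0) k b0 v' hk

/-- If a value `v` is chosen with proposal number `n`, then any higher-numbered
proposal `n' > n` accepted by a majority must carry value `v`. Consequently, uniform
agreement holds: any two decided values are equal. -/
theorem paxos_agreement {A V : Type} [Fintype A] [DecidableEq A] :
    ∀ (Proposed : Set V) (h : List (Ev A V)) (n : ℕ) (v : V),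
      WF Proposed h → Chosen h n v →
      (∀ n' v', n < n' → Chosen h n' v' → v' = v) ∧
      (∀ n' v', Chosen h n' v' → v' = v) := by
  intro Proposed h n v hwf hch
  have key1 : ∀ n' v', n < n' → Chosen h n' v' → v' = v := by
    intro n' v' hn hch'
    obtain ⟨Q', hQ', hacc'⟩ := hch'
    obtain ⟨a, ha⟩ := quorum_nonempty hQ'
    obtain ⟨i, hi⟩ := hacc' a ha
    exact paxos_key Proposed h n v hwf hch n' hn i a v' hi
  refine ⟨key1, ?_⟩
  intro n' v' hch'
  obtain ⟨Q, hQ, hacc⟩ := hch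
  obtain ⟨a, ha⟩ := quorum_nonempty hQ
  obtain ⟨i, hi⟩ := hacc a ha
  rcases lt_trichotomy n n' with hlt | rfl | hlt
  · exact key1 n' v' hlt hch'
  · obtain ⟨Q', hQ', hacc'⟩ := hch'
    obtain ⟨a', ha'⟩ := quorum_nonempty hQ'
    obtain ⟨j, hj⟩ := hacc' a' ha'
    exact ((hwf i a n v hi).2.1 j a' v' hj)
  · exact (paxos_key Proposed h n' v' hwf hch' n hlt i a v hi).symm
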